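/- Let G=(V,E) be a finite connected weighted graph with symmetric positive edge weights and measure μ. Then there exists a constant C > 0 depending only on the graph such that for every function u : V → ℝ, max_V u − min_V u ≤ C ‖Δu‖_∞. Explicitly one may take C = √((ℓ−1)|V| / (w₀ λ₁)), where ℓ is the number of vertices, |V| = Σ_x μ(x), w₀ = min of the edge weights, and λ₁ = inf{ ∫_V |∇v|² dμ : ∫_V v dμ = 0, ∫_V v² dμ = 1 } is the first nonzero eigenvalue of the Laplacian. -/

import Mathlib

open Real Finset Filter Topology

variable {V : Type*}

/-- Graph Laplacian: Δu(x) = (1/μ x) Σ_y ω_{xy}(u(y) − u(x)); non-edges have weight 0. -/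
noncomputable def glap [Fintype V] (μ : V → ℝ) (w : V → V → ℝ) (u : V → ℝ) (x : V) : ℝ :=
  (1 / μ x) * ∑ y, w x y * (u y - u x)

/-- Integral over the graph: ∫_V g dμ = Σ_x μ(x) g(x). -/
noncomputable def intg [Fintype V] (μ : V → ℝ) (g : V → ℝ) : ℝ := ∑ x, μ x * g x

/-- Dirichlet energy ∫_V |∇u|² dμ = (1/2) Σ_x Σ_y ω_{xy}(u(y) − u(x))². -/
noncomputable def gradSq [Fintype V] (w : V → V → ℝ) (u : V → ℝ) : ℝ :=
  (1/2) * ∑ x, ∑ y, w x y * (u y - u x)^2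

/-- Connectivity: any two vertices are joined by a finite chain of positive-weight edges. -/
def GConn (w : V → V → ℝ) : Prop :=
  ∀ x y : V, Relation.ReflTransGen (fun a b => 0 < w a b) x y

/-- Sup norm ‖u‖_∞. -/
noncomputable def supnorm [Fintype V] (u : V → ℝ) : ℝ := ⨆ x, |u x|

lemma antisym_sum_zero [Fintype V] {w : V → V → ℝ} (hs : ∀ x y, w x y = w y x)
    (u : V → ℝ) (S : Finset V) :
    ∑ x ∈ S, ∑ y ∈ S, w x y * (u y - u x) = 0 := by
  have h : ∑ x ∈ S, ∑ y ∈ S, w x y * (u y - u x)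
      = - ∑ x ∈ S, ∑ y ∈ S, w x y * (u y - u x) := by
    calc ∑ x ∈ S, ∑ y ∈ S, w x y * (u y - u x)
        = ∑ x ∈ S, ∑ y ∈ S, -(w y x * (u x - u y)) := by
          apply Finset.sum_congr rfl; intro x _
          apply Finset.sum_congr rfl; intro y _
          rw [hs x y]; ring
      _ = - ∑ x ∈ S, ∑ y ∈ S, w y x * (u x - u y) := by
          simp [Finset.sum_neg_distrib]
      _ = - ∑ y ∈ S, ∑ x ∈ S, w y x * (u x - u y) := by rw [Finset.sum_comm]
      _ = - ∑ x ∈ S, ∑ y ∈ S, w x y * (u y - u x) := rfl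
  linarith

lemma crossing {α : Type*} {r : α → α → Prop} {S : Set α} {x y : α}
    (h : Relation.ReflTransGen r x y) (hx : x ∈ S) (hy : y ∉ S) :
    ∃ a b, r a b ∧ a ∈ S ∧ b ∉ S := by
  induction h with
  | refl => exact absurd hx hy
  | @tail b c h' step ih =>
    by_cases hb : b ∈ S
    · exact ⟨b, c, step, hb, hy⟩
    · exact ih hb

/-- Elliptic estimate: max u − min u ≤ C ‖Δu‖_∞ with C depending only on the graph. -/
theorem stmt3 [Fintype V] [Nonempty V] (μ : V → ℝ) (w : V → V → ℝ)
    (hμ : ∀ x, 0 < μ x) (hsymm : ∀ x y, w x y = w y x) (hnn : ∀ x y, 0 ≤ w x y)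
    (hconn : GConn w) :
    ∃ C : ℝ, 0 < C ∧ ∀ u : V → ℝ,
      (⨆ x, u x) - (⨅ x, u x) ≤ C * supnorm (glap μ w u) := by
  classical
  -- basic facts about sup/inf over a finite nonempty type
  have hsup : ∀ u : V → ℝ, ∃ a : V, (⨆ x, u x) = u a ∧ ∀ x, u x ≤ u a := by
    intro u
    obtain ⟨a, ha⟩ := Finite.exists_max u
    exact ⟨a, le_antisymm (ciSup_le ha) (le_ciSup (Set.Finite.bddAbove (Set.finite_range u)) a), ha⟩
  have hinf : ∀ u : V → ℝ, ∃ b : V, (⨅ x, u x) = u b ∧ ∀ x, u b ≤ u x := by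
    intro u
    obtain ⟨b, hb⟩ := Finite.exists_min u
    exact ⟨b, le_antisymm (ciInf_le (Set.Finite.bddBelow (Set.finite_range u)) b) (le_ciInf hb), hb⟩
  have hsn : ∀ u : V → ℝ, ∀ x, |glap μ w u x| ≤ supnorm (glap μ w u) := by
    intro u x
    unfold supnorm
    exact le_ciSup (Set.Finite.bddAbove (Set.finite_range (fun z => |glap μ w u z|))) x
  have hsn0 : ∀ u : V → ℝ, 0 ≤ supnorm (glap μ w u) := by
    intro u
    obtain ⟨x⟩ := ‹Nonempty V›
    exact (abs_nonneg _).trans (hsn u x)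
  by_cases htriv : ∀ x y : V, x = y
  · refine ⟨1, one_pos, fun u => ?_⟩
    obtain ⟨a, ha, _⟩ := hsup u
    obtain ⟨b, hb, _⟩ := hinf u
    rw [ha, hb, htriv a b]
    simpa using hsn0 u
  -- nontrivial case
  push_neg at htriv
  obtain ⟨x₀, y₀, hxy⟩ := htriv
  -- there exists a positive-weight edge
  have hedge : ∃ p q : V, 0 < w p q := by
    rcases (Relation.ReflTransGen.cases_head (hconn x₀ y₀)) with h | ⟨c, hc, _⟩
    · exact absurd h hxy
    · exact ⟨x₀, c, hc⟩
  set P : Finset (V × V) := Finset.univ.filter (fun p => 0 < w p.1 p.2) with hP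
  have hPne : P.Nonempty := by
    obtain ⟨p, q, hpq⟩ := hedge
    exact ⟨(p, q), Finset.mem_filter.mpr ⟨Finset.mem_univ _, hpq⟩⟩
  set w₀ : ℝ := P.inf' hPne (fun p => w p.1 p.2) with hw₀
  have hw₀pos : 0 < w₀ := by
    rw [hw₀, Finset.lt_inf'_iff]
    intro b hb
    exact (Finset.mem_filter.mp hb).2
  have hw₀le : ∀ p q : V, 0 < w p q → w₀ ≤ w p q := by
    intro p q h
    exact Finset.inf'_le (fun z : V × V => w z.1 z.2) (Finset.mem_filter.mpr ⟨Finset.mem_univ ((p, q) : V × V), h⟩)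
  set M : ℝ := ∑ x, μ x with hM
  have hMpos : 0 < M := Finset.sum_pos (fun x _ => hμ x) Finset.univ_nonempty
  set ℓ : ℕ := Fintype.card V with hℓ
  have hℓpos : 0 < (ℓ : ℝ) := by exact_mod_cast Fintype.card_pos
  refine ⟨(ℓ : ℝ) * M / w₀, by positivity, fun u => ?_⟩
  set ε : ℝ := supnorm (glap μ w u) with hε
  have hε0 : 0 ≤ ε := hsn0 u
  set δ : ℝ := ε * M / w₀ with hδ
  have hδ0 : 0 ≤ δ := by positivity
  obtain ⟨a, ha, hamax⟩ := hsup u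
  obtain ⟨b, hb, hbmin⟩ := hinf u
  rw [ha, hb]
  -- key step: for each level r below the max, there is a crossing edge of small gap
  have key : ∀ r : ℝ, (∃ y, u y ≤ r) → r < u a →
      ∃ x y : V, u y ≤ r ∧ r < u x ∧ u x - u y ≤ δ := by
    intro r ⟨y₁, hy₁⟩ hra
    set S : Finset V := Finset.univ.filter (fun x => r < u x) with hS
    -- the weighted sum identity
    have hid : ∑ x ∈ S, μ x * glap μ w u x = ∑ x ∈ S, ∑ y ∈ Sᶜ, w x y * (u y - u x) := by
      have h1 : ∀ x, μ x * glap μ w u x = ∑ y, w x y * (u y - u x) := by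
        intro x
        unfold glap
        rw [← mul_assoc, mul_one_div, div_self (hμ x).ne', one_mul]
      calc ∑ x ∈ S, μ x * glap μ w u x = ∑ x ∈ S, ∑ y, w x y * (u y - u x) := by
            exact Finset.sum_congr rfl (fun x _ => h1 x)
        _ = ∑ x ∈ S, ((∑ y ∈ S, w x y * (u y - u x)) + ∑ y ∈ Sᶜ, w x y * (u y - u x)) := by
            apply Finset.sum_congr rfl; intro x _
            rw [Finset.sum_add_sum_compl]
        _ = (∑ x ∈ S, ∑ y ∈ S, w x y * (u y - u x)) + ∑ x ∈ S, ∑ y ∈ Sᶜ, w x y * (u y - u x) := by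
            rw [Finset.sum_add_distrib]
        _ = ∑ x ∈ S, ∑ y ∈ Sᶜ, w x y * (u y - u x) := by
            rw [antisym_sum_zero hsymm u S, zero_add]
    -- lower bound on the sum
    have hlow : -(ε * M) ≤ ∑ x ∈ S, μ x * glap μ w u x := by
      have h1 : ∀ x ∈ S, μ x * (-ε) ≤ μ x * glap μ w u x := by
        intro x _
        exact mul_le_mul_of_nonneg_left (neg_le_of_abs_le (hsn u x)) (hμ x).le
      calc -(ε * M) ≤ -(ε * ∑ x ∈ S, μ x) := by
            have : ∑ x ∈ S, μ x ≤ M := by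
              rw [hM]
              exact Finset.sum_le_sum_of_subset_of_nonneg (Finset.subset_univ S)
                (fun x _ _ => (hμ x).le)
            nlinarith
        _ = (∑ x ∈ S, μ x) * (-ε) := by ring
        _ = ∑ x ∈ S, μ x * (-ε) := by rw [Finset.sum_mul]
        _ ≤ ∑ x ∈ S, μ x * glap μ w u x := Finset.sum_le_sum h1
    -- find a crossing edge
    have haS : a ∈ (↑S : Set V) := by simp [hS, hra]
    have hy₁S : y₁ ∉ (↑S : Set V) := by simp [hS]; linarith
    obtain ⟨p, q, hpq, hpS, hqS⟩ := crossing (hconn a y₁) haS hy₁S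
    have hpS' : p ∈ S := hpS
    have hqS' : q ∈ Sᶜ := by simpa [Finset.mem_compl] using hqS
    have hpu : r < u p := by simpa [hS] using hpS'
    have hqu : u q ≤ r := by
      have := Finset.mem_compl.mp hqS'
      simp only [hS, Finset.mem_filter, Finset.mem_univ, true_and] at this
      linarith [not_lt.mp this]
    -- single term bound: sum of nonpositive terms ≤ single term
    have hsingle : ∑ x ∈ S, ∑ y ∈ Sᶜ, w x y * (u y - u x) ≤ w p q * (u q - u p) := by
      rw [← Finset.sum_product']
      have h0 : ∀ z ∈ S ×ˢ Sᶜ, 0 ≤ -(w z.1 z.2 * (u z.2 - u z.1)) := by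
        rintro ⟨x, y⟩ hz
        obtain ⟨hx, hy⟩ := Finset.mem_product.mp hz
        have hxu : r < u x := by simpa [hS] using hx
        have hyu : u y ≤ r := by
          have := Finset.mem_compl.mp hy
          simp only [hS, Finset.mem_filter, Finset.mem_univ, true_and] at this
          linarith [not_lt.mp this]
        have : u y - u x ≤ 0 := by linarith
        nlinarith [hnn x y]
      have hmem : (p, q) ∈ S ×ˢ Sᶜ := Finset.mem_product.mpr ⟨hpS', hqS'⟩
      have := Finset.single_le_sum h0 hmem
      have hsum : ∑ z ∈ S ×ˢ Sᶜ, -(w z.1 z.2 * (u z.2 - u z.1))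
          = - ∑ z ∈ S ×ˢ Sᶜ, w z.1 z.2 * (u z.2 - u z.1) := by
        simp [Finset.sum_neg_distrib]
      rw [hsum] at this
      linarith
    -- conclude the gap bound
    have hwb : w₀ ≤ w p q := hw₀le p q hpq
    have hgap : w p q * (u p - u q) ≤ ε * M := by nlinarith
    refine ⟨p, q, hqu, hpu, ?_⟩
    rw [hδ]
    have h1 : u p - u q ≤ ε * M / w p q := by
      rw [le_div_iff₀ hpq]
      linarith [hgap]
    have h2 : ε * M / w p q ≤ ε * M / w₀ := by
      have hnum : 0 ≤ ε * M := mul_nonneg hε0 hMpos.le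
      gcongr
    linarith
  -- chaining induction on the number of vertices above level r
  have chain : ∀ n : ℕ, ∀ r : ℝ, (∃ y, u y ≤ r) →
      (Finset.univ.filter (fun x => r < u x)).card ≤ n → u a - r ≤ n * δ := by
    intro n
    induction n with
    | zero =>
      intro r hy hcard
      have hempty : (Finset.univ.filter (fun x => r < u x)) = ∅ :=
        Finset.card_eq_zero.mp (Nat.le_zero.mp hcard)
      have : ¬ r < u a := by
        intro h
        have : a ∈ Finset.univ.filter (fun x => r < u x) := by simp [h]
        rw [hempty] at this
        exact absurd this (Finset.notMem_empty a)
      simpa using not_lt.mp this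
    | succ n ih =>
      intro r hy hcard
      by_cases hra : r < u a
      · obtain ⟨x, y, hyr, hrx, hgap⟩ := key r hy hra
        have hsub : (Finset.univ.filter (fun z => u x < u z)) ⊂
            (Finset.univ.filter (fun z => r < u z)) := by
          constructor
          · intro z hz
            simp only [Finset.mem_filter, Finset.mem_univ, true_and] at hz ⊢
            linarith
          · intro hcon
            have : x ∈ Finset.univ.filter (fun z => u x < u z) := hcon (by simp [hrx])
            simp at this
        have hcard' : (Finset.univ.filter (fun z => u x < u z)).card ≤ n := by
          have := Finset.card_lt_card hsub
          omega
        have hax : u a - u x ≤ n * δ := ih (u x) ⟨x, le_refl _⟩ hcard'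
        push_cast
        linarith
      · push_cast
        nlinarith [not_lt.mp hra]
  have hfinal := chain ℓ (u b) ⟨b, le_refl _⟩ (by
    rw [hℓ, ← Finset.card_univ]
    exact Finset.card_filter_le _ _)
  calc u a - u b ≤ (ℓ : ℝ) * δ := hfinal
    _ = (ℓ : ℝ) * M / w₀ * ε := by rw [hδ]; field_simp
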